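/- Let b and c be rational numbers with c ≠ 0, and work in the ring of formal power series over ℚ. Let r_{b,c}(x) = 1 + c·x + b·∑_{k≥1} x^{2^{k+1}−1} (i.e., 1 + cx + b(x³ + x⁷ + x¹⁵ + ⋯)); it has constant term 1 and is invertible. Let G = (1 + (b/c)·∑_{k≥1} x^{2^{k+1}−2})·r_{b,c}(x)⁻¹ (i.e., the series (1 + (b/c)(x² + x⁶ + x¹⁴ + ⋯))/r_{b,c}(x)). Then r_{b,c}(x)·(1 − c·x·G) = 1; that is, r_{b,c}(x) = 1/(1 − c·x·G), identifying G as the first-level series r_{b,c}^{(1)}(x) in the Stieltjes continued fraction expansion of r_{b,c}(x). -/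

import Mathlib

open scoped Classical

/-- The series `∑_{k≥1} x^(2^(k+1) - 1) = x³ + x⁷ + x¹⁵ + ⋯` over `ℚ`, i.e., the
series with exponents `2^k - 1` for `k ≥ 2`. -/
noncomputable def tailSeries : PowerSeries ℚ :=
  PowerSeries.mk fun n => if ∃ k : ℕ, 2 ≤ k ∧ n = 2 ^ k - 1 then 1 else 0

/-- The series `∑_{k≥1} x^(2^(k+1) - 2) = x² + x⁶ + x¹⁴ + ⋯` over `ℚ`, i.e., the
series with exponents `2^k - 2` for `k ≥ 2`. -/
noncomputable def tailSeriesSq : PowerSeries ℚ :=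
  PowerSeries.mk fun n => if ∃ k : ℕ, 2 ≤ k ∧ n = 2 ^ k - 2 then 1 else 0

/-- Let `r_{b,c}(x) = 1 + c·x + b·(x³ + x⁷ + x¹⁵ + ⋯)` and
`G = (1 + (b/c)·(x² + x⁶ + x¹⁴ + ⋯)) / r_{b,c}(x)`. Then
`r_{b,c}(x)·(1 - c·x·G) = 1`, identifying `G` as the first-level series
`r_{b,c}^{(1)}(x)` in the Stieltjes continued fraction expansion of `r_{b,c}(x)`. -/
theorem generalized_rueppel_first_level (b c : ℚ) (hc : c ≠ 0) :
    (1 + PowerSeries.C c * PowerSeries.X + PowerSeries.C b * tailSeries) *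
        (1 - PowerSeries.C c * PowerSeries.X *
          ((1 + PowerSeries.C (b / c) * tailSeriesSq) *
            (1 + PowerSeries.C c * PowerSeries.X + PowerSeries.C b * tailSeries)⁻¹))
      = 1 := by
  set r : PowerSeries ℚ :=
    1 + PowerSeries.C c * PowerSeries.X + PowerSeries.C b * tailSeries with hr
  have hX : PowerSeries.X * tailSeriesSq = tailSeries := by
    ext n
    cases n with
    | zero =>
        simp only [PowerSeries.coeff_zero_eq_constantCoeff, map_mul,
          PowerSeries.constantCoeff_X, zero_mul, tailSeries,
          PowerSeries.constantCoeff_mk]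
        symm
        rw [if_neg]
        rintro ⟨k, hk, h⟩
        have : 4 ≤ 2 ^ k := by
          calc (4:ℕ) = 2 ^ 2 := rfl
          _ ≤ 2 ^ k := Nat.pow_le_pow_right (by norm_num) hk
        omega
    | succ m =>
        rw [PowerSeries.coeff_succ_X_mul]
        simp only [tailSeries, tailSeriesSq, PowerSeries.coeff_mk]
        congr 1
        apply propext
        constructor
        · rintro ⟨k, hk, h⟩
          have : 4 ≤ 2 ^ k := by
            calc (4:ℕ) = 2 ^ 2 := rfl
            _ ≤ 2 ^ k := Nat.pow_le_pow_right (by norm_num) hk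
          exact ⟨k, hk, by omega⟩
        · rintro ⟨k, hk, h⟩
          have : 4 ≤ 2 ^ k := by
            calc (4:ℕ) = 2 ^ 2 := rfl
            _ ≤ 2 ^ k := Nat.pow_le_pow_right (by norm_num) hk
          exact ⟨k, hk, by omega⟩
  have hconst : PowerSeries.constantCoeff r ≠ 0 := by
    have : PowerSeries.constantCoeff tailSeries = 0 := by
      simp [tailSeries, PowerSeries.constantCoeff_mk]
      intro k hk h
      have : 4 ≤ 2 ^ k := by
        calc (4:ℕ) = 2 ^ 2 := rfl
        _ ≤ 2 ^ k := Nat.pow_le_pow_right (by norm_num) hk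
      omega
    simp [hr, this]
  have hinv : r * r⁻¹ = 1 := PowerSeries.mul_inv_cancel r hconst
  have key : PowerSeries.C c * PowerSeries.X *
      (1 + PowerSeries.C (b / c) * tailSeriesSq) =
      PowerSeries.C c * PowerSeries.X + PowerSeries.C b * tailSeries := by
    have hbc : PowerSeries.C c * PowerSeries.C (b / c) = PowerSeries.C b := by
      rw [← map_mul]
      congr 1
      field_simp
    calc PowerSeries.C c * PowerSeries.X *
        (1 + PowerSeries.C (b / c) * tailSeriesSq)
        = PowerSeries.C c * PowerSeries.X +
          (PowerSeries.C c * PowerSeries.C (b / c)) *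
            (PowerSeries.X * tailSeriesSq) := by ring
      _ = PowerSeries.C c * PowerSeries.X + PowerSeries.C b * tailSeries := by
          rw [hbc, hX]
  calc r * (1 - PowerSeries.C c * PowerSeries.X *
        ((1 + PowerSeries.C (b / c) * tailSeriesSq) * r⁻¹))
      = r - (PowerSeries.C c * PowerSeries.X *
          (1 + PowerSeries.C (b / c) * tailSeriesSq)) * (r * r⁻¹) := by ring
    _ = 1 := by rw [hinv, key, hr]; ring
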